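/- arXiv:2008.02433 — 4 statements merged into one kernel-verified Lean document; each statement's English description precedes it below -/
import Mathlib

section
/- Let G be a finite group and N a non-trivial normal subgroup. Then (G, N) is a Camina pair (i.e., every x ∈ G − N is conjugate to xy for all y ∈ N) if and only if for every x ∈ G − N, |C_G(x)| = |C_{G/N}(xN)|. -/
open CategoryTheory

/-- The kernel of the irreducible character of `V` (the kernel of the representation). -/
noncomputable def FDRep.charKer {G : Type} [Group G] (V : FDRep ℂ G) : Subgroup G :=
  MonoidHom.ker (Representation.asGroupHom V.ρ)

/-- The co-degree `cod(χ) = |G : ker χ| / χ(1)` of the character of `V`. -/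
noncomputable def FDRep.cod {G : Type} [Group G] (V : FDRep ℂ G) : ℕ :=
  V.charKer.index / Module.finrank ℂ V

/-- `G` is a `D'₀`-group: distinct irreducible characters of `G` have distinct co-degrees,
i.e. the co-degree map is injective on `Irr(G)`. -/
def codInjective (G : Type) [Group G] : Prop :=
  ∀ V W : FDRep ℂ G, Simple V → Simple W → V.cod = W.cod → V.character = W.character

/-- `G` is a Frobenius group with kernel `N`. -/
def IsFrobeniusWithKernel (G : Type) [Group G] (N : Subgroup G) : Prop :=
  N.Normal ∧ N ≠ ⊥ ∧ N ≠ ⊤ ∧ ∀ x ∈ N, x ≠ 1 → Subgroup.centralizer {x} ≤ N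



lemma class_card_mul_centralizer_card {H : Type*} [Group H] [Finite H] (g : H) :
    Nat.card {h | IsConj g h} * Nat.card (Subgroup.centralizer ({g} : Set H)) = Nat.card H := by
  classical
  have := Fintype.ofFinite H
  have h1 : {h | IsConj g h} = MulAction.orbit (ConjAct H) g := by
    ext h
    rw [ConjAct.mem_orbit_conjAct, Set.mem_setOf_eq, isConj_comm]
  have h2 : Nat.card (Subgroup.centralizer ({g} : Set H)) =
      Nat.card (MulAction.stabilizer (ConjAct H) g) := by
    rw [Subgroup.centralizer_eq_comap_stabilizer]
    exact Nat.card_congr (Equiv.subtypeEquiv ConjAct.toConjAct.toEquiv (fun x => Iff.rfl))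
  rw [h1, h2]
  simp only [Nat.card_eq_fintype_card]
  exact MulAction.card_orbit_mul_card_stabilizer_eq_card_group (ConjAct H) g

set_option maxHeartbeats 1000000 in
lemma preimage_class_card {G : Type} [Group G] [Fintype G]
    (N : Subgroup G) [N.Normal] (x : G) :
    Nat.card (QuotientGroup.mk ⁻¹' {q : G ⧸ N | IsConj (↑x) q} : Set G) *
      Nat.card (Subgroup.centralizer ({(x : G ⧸ N)} : Set (G ⧸ N))) = Nat.card G := by
  have hT : Nat.card (QuotientGroup.mk ⁻¹' {q : G ⧸ N | IsConj (↑x) q} : Set G) =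
      Nat.card N * Nat.card {q : G ⧸ N | IsConj (↑x) q} := by
    rw [Nat.card_congr (QuotientGroup.preimageMkEquivSubgroupProdSet N _), Nat.card_prod]
  have hQ : Nat.card {q : G ⧸ N | IsConj (↑x) q} * Nat.card
      (Subgroup.centralizer ({(x : G ⧸ N)} : Set (G ⧸ N))) = Nat.card (G ⧸ N) :=
    class_card_mul_centralizer_card ((x : G ⧸ N))
  rw [hT, mul_assoc, hQ, Subgroup.card_eq_card_quotient_mul_card_subgroup N, mul_comm]


theorem camina_pair_iff_centralizer_card {G : Type} [Group G] [Fintype G]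
    (N : Subgroup G) [N.Normal] (hN : N ≠ ⊥) :
    (∀ x ∉ N, ∀ y ∈ N, IsConj x (x * y)) ↔
      ∀ x ∉ N, Nat.card (Subgroup.centralizer ({x} : Set G)) =
        Nat.card (Subgroup.centralizer ({(x : G ⧸ N)} : Set (G ⧸ N))) := by
  classical
  have hST : ∀ x : G, {g | IsConj x g} ⊆
      (QuotientGroup.mk ⁻¹' {q : G ⧸ N | IsConj (↑x) q} : Set G) :=
    fun x g hg => (QuotientGroup.mk' N).map_isConj hg
  constructor
  · intro h x hx
    have hTS : (QuotientGroup.mk ⁻¹' {q : G ⧸ N | IsConj (↑x) q} : Set G) ⊆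
        {g | IsConj x g} := by
      intro g hg
      obtain ⟨c, hc⟩ := isConj_iff.mp (hg : IsConj (↑x : G ⧸ N) ↑g)
      obtain ⟨h', rfl⟩ := QuotientGroup.mk_surjective c
      have hc' : ((h' * x * h'⁻¹ : G) : G ⧸ N) = ↑g := by
        simpa using hc
      have hy : (h' * x * h'⁻¹)⁻¹ * g ∈ N := (QuotientGroup.eq).mp hc'
      have hz : h' * x * h'⁻¹ ∉ N := fun hmem => hx (by
        have := Subgroup.Normal.conj_mem ‹N.Normal› _ hmem h'⁻¹
        simpa [mul_assoc] using this)
      have h1 : IsConj x (h' * x * h'⁻¹) := isConj_iff.mpr ⟨h', rfl⟩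
      have h2 : IsConj (h' * x * h'⁻¹) ((h' * x * h'⁻¹) * ((h' * x * h'⁻¹)⁻¹ * g)) :=
        h _ hz _ hy
      simpa [mul_assoc] using h1.trans h2
    have hSeq : {g | IsConj x g} =
        (QuotientGroup.mk ⁻¹' {q : G ⧸ N | IsConj (↑x) q} : Set G) :=
      le_antisymm (hST x) hTS
    have hS := class_card_mul_centralizer_card x
    rw [hSeq] at hS
    have hpos : 0 < Nat.card (QuotientGroup.mk ⁻¹' {q : G ⧸ N | IsConj (↑x) q} : Set G) :=
      Nat.card_pos_iff.mpr ⟨⟨⟨x, hSeq ▸ (IsConj.refl x : x ∈ {g | IsConj x g})⟩⟩, Set.toFinite _⟩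
    exact Nat.eq_of_mul_eq_mul_left hpos (by rw [hS, preimage_class_card N x])
  · intro h x hx y hy
    have hT := preimage_class_card N x
    rw [← h x hx] at hT
    have hpos : 0 < Nat.card (Subgroup.centralizer ({x} : Set G)) := Nat.card_pos
    have hcard : Nat.card {g | IsConj x g} =
        Nat.card (QuotientGroup.mk ⁻¹' {q : G ⧸ N | IsConj (↑x) q} : Set G) :=
      Nat.eq_of_mul_eq_mul_right hpos (by rw [class_card_mul_centralizer_card x, hT])
    have hEq : {g | IsConj x g} =
        (QuotientGroup.mk ⁻¹' {q : G ⧸ N | IsConj (↑x) q} : Set G) := by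
      apply Set.eq_of_subset_of_ncard_le (hST x) _ (Set.toFinite _)
      rw [← Nat.card_coe_set_eq, ← Nat.card_coe_set_eq, hcard]
    have hxy : x * y ∈ (QuotientGroup.mk ⁻¹' {q : G ⧸ N | IsConj (↑x) q} : Set G) := by
      have hmk : ((x * y : G) : G ⧸ N) = ↑x := by
        rw [QuotientGroup.mk_mul, (QuotientGroup.eq_one_iff y).mpr hy, mul_one]
      simp only [Set.mem_preimage, Set.mem_setOf_eq, hmk]
      exact IsConj.refl _
    rw [← hEq] at hxy
    exact hxy
end

section
/- Let p be a prime and G a non-trivial finite p-group such that distinct irreducible characters of G have distinct co-degrees. Then G is cyclic of order 2. -/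
open CategoryTheory

variable {G : Type} [Group G]

/-- The one-dimensional representation attached to `l : G →* ℂˣ`. -/
noncomputable def linRep (l : G →* ℂˣ) : FDRep ℂ G :=
  FDRep.of
    ({ toFun := fun g => (l g : ℂ) • LinearMap.id
       map_one' := by simp [Module.End.one_eq_id]
       map_mul' := fun g h => by
         ext x
         simp [smul_smul, mul_comm] } : Representation ℂ G ℂ)

lemma linRep_ρ (l : G →* ℂˣ) (g : G) : (linRep l).ρ g = (l g : ℂ) • LinearMap.id := rfl

lemma linRep_finrank (l : G →* ℂˣ) : Module.finrank ℂ (linRep l) = 1 :=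
  Module.finrank_self ℂ

lemma linRep_character (l : G →* ℂˣ) (g : G) : (linRep l).character g = (l g : ℂ) := by
  unfold FDRep.character
  rw [linRep_ρ, map_smul]
  show (l g : ℂ) • (LinearMap.trace ℂ ℂ LinearMap.id) = _
  rw [LinearMap.trace_id]
  simp

lemma smul_id_eq_id_iff (c : ℂ) :
    c • (LinearMap.id : ℂ →ₗ[ℂ] ℂ) = LinearMap.id ↔ c = 1 := by
  constructor
  · intro h
    have := congrArg (fun f : ℂ →ₗ[ℂ] ℂ => f 1) h
    simpa using this
  · rintro rfl; simp

lemma linRep_charKer (l : G →* ℂˣ) : (linRep l).charKer = l.ker := by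
  ext g
  rw [FDRep.charKer, MonoidHom.mem_ker, MonoidHom.mem_ker, Units.ext_iff]
  rw [show ((1 : (((linRep l) : Type) →ₗ[ℂ] (linRep l))ˣ) : ((linRep l) : Type) →ₗ[ℂ] (linRep l)) = LinearMap.id from rfl]
  rw [Representation.asGroupHom_apply]
  show (l g : ℂ) • (LinearMap.id : ℂ →ₗ[ℂ] ℂ) = LinearMap.id ↔ _
  rw [smul_id_eq_id_iff]
  exact ⟨fun h => Units.ext (by simpa using h), fun h => by rw [h]; simp⟩

lemma linRep_cod (l : G →* ℂˣ) : (linRep l).cod = l.ker.index := by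
  rw [FDRep.cod, linRep_charKer]
  rw [show Module.finrank ℂ (linRep l) = 1 from linRep_finrank l]
  simp


lemma fg_mono_injective {A B : FGModuleCat.{0} ℂ} (f : A ⟶ B) [Mono f] :
    Function.Injective f.hom.hom := by
  have hker : ∀ x : A, f.hom.hom x = 0 → x = 0 := by
    intro x hx
    let g : FGModuleCat.of ℂ ℂ ⟶ A := ⟨ModuleCat.ofHom (LinearMap.toSpanSingleton ℂ A x)⟩
    have hg : g ≫ f = (0 : FGModuleCat.of ℂ ℂ ⟶ A) ≫ f := by
      apply FGModuleCat.hom_ext; apply LinearMap.ext; intro c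
      show f.hom.hom (c • x) = _
      rw [map_smul, hx]
      simp
    have h2 := (cancel_mono f).mp hg
    have h3 : LinearMap.toSpanSingleton ℂ A x = (0 : ℂ →ₗ[ℂ] A) := congrArg (fun k => k.hom.hom) h2
    simpa using congrArg (fun (m : ℂ →ₗ[ℂ] A) => m (1:ℂ)) h3
  intro x y hxy
  have : f.hom.hom (x - y) = 0 := by rw [map_sub, hxy, sub_self]
  have := hker _ this
  rwa [sub_eq_zero] at this

lemma linRep_simple (l : G →* ℂˣ) : Simple (linRep l) := by
  constructor
  intro Y f hm
  constructor
  · intro hiso hzero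
    have h1 : 𝟙 (linRep l) = (0 : linRep l ⟶ linRep l) := by
      rw [← IsIso.inv_hom_id f]; simp [hzero]
    have h2 : (LinearMap.id : ℂ →ₗ[ℂ] ℂ) = 0 := by
      have h2' := congrArg Action.Hom.hom h1
      rw [Action.id_hom, Action.zero_hom] at h2'
      exact congrArg (fun k => k.hom.hom) h2'
    exact one_ne_zero (α := ℂ) (by simpa using congrArg (fun (m : ℂ →ₗ[ℂ] ℂ) => m (1:ℂ)) h2)
  · intro hnz
    have hmono' : Mono ((Action.forget (FGModuleCat ℂ) (MonCat.of G)).map f) :=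
      inferInstance
    haveI hmono : Mono f.hom := hmono'
    let F : (Y : Type) →ₗ[ℂ] ℂ := f.hom.hom.hom
    have hinj : Function.Injective F := fg_mono_injective f.hom
    have hhnz : F ≠ 0 := by
      intro h0
      apply hnz
      ext x
      show F x = _
      rw [h0]
      simp [Action.zero_hom]
      rfl
    have hsurj : Function.Surjective F := by
      obtain ⟨x, hxne⟩ : ∃ x, F x ≠ 0 := by
        by_contra hc
        push_neg at hc
        exact hhnz (LinearMap.ext hc)
      intro c
      refine ⟨(c / F x) • x, ?_⟩
      rw [map_smul, smul_eq_mul, div_mul_cancel₀ _ hxne]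
    let e : (Y : Type) ≃ₗ[ℂ] ℂ := LinearEquiv.ofBijective F ⟨hinj, hsurj⟩
    have : IsIso f.hom := by
      refine ⟨⟨⟨ModuleCat.ofHom (e.symm : ℂ →ₗ[ℂ] (Y : Type))⟩, ?_, ?_⟩⟩
      · apply FGModuleCat.hom_ext; apply LinearMap.ext
        intro y
        exact e.left_inv y
      · apply FGModuleCat.hom_ext; apply LinearMap.ext
        intro c
        exact e.right_inv c
    infer_instance


section MainAux

variable {G : Type} [Group G]

lemma abelianization_of_surjective' {H : Type} [Group H] :
    Function.Surjective (Abelianization.of : H →* Abelianization H) :=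
  fun y => QuotientGroup.mk_surjective y

theorem gt_aux : ∀ (n : ℕ) (H : Type) [Group H] [Finite H] (p : ℕ), Nat.card H = n →
    p.Prime → IsPGroup p H → Nat.card (Abelianization H) ≤ 2 → Nat.card H ≤ 2 := by
  intro n
  induction n using Nat.strong_induction_on with
  | _ n ih =>
    intro H _ _ p hcard hp hG hab
    haveI : Fact p.Prime := ⟨hp⟩
    by_contra hbig
    push_neg at hbig
    have hnt : Nontrivial H := by
      have : 1 < Nat.card H := by omega
      exact (Finite.one_lt_card_iff_nontrivial).mp this
    have hcenter : Subgroup.center H ≠ ⊤ := by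
      intro htop
      letI : CommGroup H := Group.commGroupOfCenterEqTop htop
      have : Nat.card H = Nat.card (Abelianization H) :=
        Nat.card_congr (Abelianization.equivOfComm (H := H)).toEquiv
      omega
    set Z := Subgroup.center H with hZ
    have hZnt : Nontrivial Z := hG.center_nontrivial
    have hQp : IsPGroup p (H ⧸ Z) := hG.to_quotient Z
    have hcardmul : Nat.card Z * Z.index = Nat.card H := Z.card_mul_index
    have hQcard : Nat.card (H ⧸ Z) = Z.index := (Subgroup.index_eq_card Z).symm
    have hZ2 : 2 ≤ Nat.card Z := Finite.one_lt_card_iff_nontrivial.mpr hZnt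
    have hQpos : 0 < Nat.card (H ⧸ Z) := Nat.card_pos
    have hQlt : Nat.card (H ⧸ Z) < n := by nlinarith
    have habQ : Nat.card (Abelianization (H ⧸ Z)) ≤ 2 := by
      set φ : Abelianization H →* Abelianization (H ⧸ Z) :=
        Abelianization.lift (Abelianization.of.comp (QuotientGroup.mk' Z)) with hφ
      have hsurj : Function.Surjective φ := by
        intro y
        obtain ⟨q, rfl⟩ := abelianization_of_surjective' y
        obtain ⟨g, rfl⟩ := QuotientGroup.mk'_surjective Z q
        exact ⟨Abelianization.of g, Abelianization.lift_apply_of _ _⟩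
      calc Nat.card (Abelianization (H ⧸ Z)) ≤ Nat.card (Abelianization H) :=
            Nat.card_le_card_of_surjective φ hsurj
        _ ≤ 2 := hab
    have hQ2 : Nat.card (H ⧸ Z) ≤ 2 := ih _ hQlt (H ⧸ Z) p rfl hp hQp habQ
    have hQcyc : IsCyclic (H ⧸ Z) := by
      rcases (show Nat.card (H ⧸ Z) = 1 ∨ Nat.card (H ⧸ Z) = 2 by omega) with h1 | h2
      · have : Subsingleton (H ⧸ Z) := (Nat.card_eq_one_iff_unique.mp h1).1
        infer_instance
      · exact isCyclic_of_prime_card (p := 2) h2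
    have hcomm : ∀ a b : H, a * b = b * a :=
      commutative_of_cyclic_center_quotient (QuotientGroup.mk' Z) (by simp [hZ])
    exact hcenter ((Subgroup.eq_top_iff' _).mpr fun x =>
      Subgroup.mem_center_iff.mpr fun g => hcomm g x)

end MainAux

theorem pGroup_codInjective_card_two {G : Type} [Group G] [Fintype G] [Nontrivial G]
    {p : ℕ} (hp : p.Prime) (hG : IsPGroup p G) (h : codInjective G) :
    Nat.card G = 2 ∧ IsCyclic G := by
  classical
  -- Step 1: homs with the same kernel index are equal
  have key : ∀ l m : G →* ℂˣ, l.ker.index = m.ker.index → l = m := by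
    intro l m hlm
    have hcod : (linRep l).cod = (linRep m).cod := by
      rw [linRep_cod, linRep_cod, hlm]
    have hchar := h (linRep l) (linRep m) (linRep_simple l) (linRep_simple m) hcod
    ext g
    have := congrFun hchar g
    rw [linRep_character, linRep_character] at this
    exact this
  -- Step 2: every hom squares to one
  have hsq : ∀ (l : G →* ℂˣ) (g : G), (l g) ^ 2 = 1 := by
    intro l g
    have hker : (l⁻¹).ker.index = l.ker.index := by
      congr 1
      ext x
      simp [MonoidHom.mem_ker, inv_eq_one]
    have := key _ _ hker
    have h2 : l g = (l g)⁻¹ := by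
      conv_lhs => rw [← this]
      rfl
    rw [sq]
    nth_rewrite 1 [h2]
    exact inv_mul_cancel _
  -- Step 3: a nontrivial hom has kernel of index 2
  have hidx : ∀ l : G →* ℂˣ, l ≠ 1 → l.ker.index = 2 := by
    intro l hl
    have hrange : (l.range : Set ℂˣ) ⊆ {1, -1} := by
      rintro x ⟨g, rfl⟩
      have h2 : ((l g : ℂˣ) : ℂ) ^ 2 = 1 := by
        rw [← Units.val_pow_eq_pow_val, hsq l g, Units.val_one]
      have : (((l g : ℂˣ) : ℂ) - 1) * (((l g : ℂˣ) : ℂ) + 1) = 0 := by ring_nf; linear_combination h2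
      rcases mul_eq_zero.mp this with h0 | h0
      · left; exact Units.ext (by simpa [sub_eq_zero] using h0)
      · right; exact Units.ext (by simpa [add_eq_zero_iff_eq_neg] using h0)
    haveI : Finite (l.range : Subgroup ℂˣ) := by
      have : Finite (Set.range l) := Set.finite_range l
      exact this
    have hcardle : Nat.card l.range ≤ 2 := by
      calc Nat.card l.range ≤ Nat.card ({1, -1} : Set ℂˣ) :=
            Nat.card_mono (Set.toFinite _) hrange
        _ = 2 := by
            rw [Nat.card_coe_set_eq, Set.ncard_pair]
            intro he
            have : ((1 : ℂˣ) : ℂ) = ((-1 : ℂˣ) : ℂ) := congrArg Units.val he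
            norm_num at this
    have hpos : 0 < Nat.card l.range := Nat.card_pos
    have hne1 : l.ker.index ≠ 1 := by
      intro h1
      apply hl
      have hker : l.ker = ⊤ := Subgroup.index_eq_one.mp h1
      ext g
      have : g ∈ l.ker := hker ▸ Subgroup.mem_top g
      simpa [MonoidHom.mem_ker] using this
    rw [Subgroup.index_ker] at hne1 ⊢
    omega
  -- Step 4: nontrivial homs are unique
  have huniq : ∀ l m : G →* ℂˣ, l ≠ 1 → m ≠ 1 → l = m := by
    intro l m hl hm
    exact key l m (by rw [hidx l hl, hidx m hm])
  -- Step 5: the abelianization has at most 2 elements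
  set A := Abelianization G with hA
  haveI : Finite A := Quotient.finite _
  haveI : NeZero ((Monoid.exponent A : ℂ)) :=
    ⟨by exact_mod_cast (Nat.cast_ne_zero (R := ℂ)).mpr Monoid.exponent_ne_zero_of_finite⟩
  have hsep : ∀ a : A, a ≠ 1 → ∃ χ : A →* ℂˣ, χ a ≠ 1 := fun a ha =>
    CommGroup.exists_apply_ne_one_of_hasEnoughRootsOfUnity A ℂ ha
  have hpull : ∀ (χ ψ : A →* ℂˣ), (∃ a, χ a ≠ 1) → (∃ b, ψ b ≠ 1) → χ = ψ := by
    intro χ ψ ⟨a, ha⟩ ⟨b, hb⟩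
    have hχ : χ.comp Abelianization.of ≠ 1 := by
      intro h1
      obtain ⟨g, rfl⟩ := abelianization_of_surjective' a
      exact ha (by simpa using DFunLike.congr_fun h1 g)
    have hψ : ψ.comp Abelianization.of ≠ 1 := by
      intro h1
      obtain ⟨g, rfl⟩ := abelianization_of_surjective' b
      exact hb (by simpa using DFunLike.congr_fun h1 g)
    have := huniq _ _ hχ hψ
    ext x
    exact congrArg Units.val (DFunLike.congr_fun this x)
  have hAvals : ∀ (χ : A →* ℂˣ) (x : A), (χ x) ^ 2 = 1 := by
    intro χ x
    obtain ⟨g, rfl⟩ := abelianization_of_surjective' x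
    exact hsq (χ.comp Abelianization.of) g
  have hall : ∀ a b : A, a ≠ 1 → b ≠ 1 → a = b := by
    intro a b ha hb
    by_contra hab
    obtain ⟨χ, hχa⟩ := hsep a ha
    obtain ⟨ψ, hψb⟩ := hsep b hb
    have hχψ : χ = ψ := hpull χ ψ ⟨a, hχa⟩ ⟨b, hψb⟩
    subst hχψ
    have habne : a * b⁻¹ ≠ 1 := by
      intro h1
      exact hab (by rwa [mul_inv_eq_one] at h1)
    obtain ⟨θ, hθ⟩ := hsep _ habne
    have hθχ : θ = χ := hpull θ χ ⟨_, hθ⟩ ⟨a, hχa⟩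
    subst hθχ
    -- θ (a * b⁻¹) = 1 since θ a = θ b = -1
    have hva : θ a = -1 := by
      have := hAvals θ a
      have h2 : ((θ a : ℂˣ) : ℂ) ^ 2 = 1 := by
        rw [← Units.val_pow_eq_pow_val, this, Units.val_one]
      have hz : (((θ a : ℂˣ) : ℂ) - 1) * (((θ a : ℂˣ) : ℂ) + 1) = 0 := by
        ring_nf; linear_combination h2
      rcases mul_eq_zero.mp hz with h0 | h0
      · exact absurd (Units.ext (by simpa [sub_eq_zero] using h0)) hχa
      · exact Units.ext (by simpa [add_eq_zero_iff_eq_neg] using h0)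
    have hvb : θ b = -1 := by
      have := hAvals θ b
      have h2 : ((θ b : ℂˣ) : ℂ) ^ 2 = 1 := by
        rw [← Units.val_pow_eq_pow_val, this, Units.val_one]
      have hz : (((θ b : ℂˣ) : ℂ) - 1) * (((θ b : ℂˣ) : ℂ) + 1) = 0 := by
        ring_nf; linear_combination h2
      rcases mul_eq_zero.mp hz with h0 | h0
      · exact absurd (Units.ext (by simpa [sub_eq_zero] using h0)) hψb
      · exact Units.ext (by simpa [add_eq_zero_iff_eq_neg] using h0)
    apply hθ
    rw [map_mul, map_inv, hva, hvb]
    simp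
  have hAcard : Nat.card A ≤ 2 := by
    have hinj : Function.Injective (fun x : A => if x = 1 then true else false) := by
      intro x y hxy
      by_cases hx : x = 1 <;> by_cases hy : y = 1 <;> simp [hx, hy] at hxy ⊢
      exact hall x y hx hy
    calc Nat.card A ≤ Nat.card Bool := Nat.card_le_card_of_injective _ hinj
      _ = 2 := by simp [Nat.card_eq_fintype_card]
  -- Step 6: conclude
  have hG2 : Nat.card G ≤ 2 := gt_aux (Nat.card G) G p rfl hp hG hAcard
  have hGnt : 1 < Nat.card G := Finite.one_lt_card_iff_nontrivial.mpr inferInstance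
  have hcard : Nat.card G = 2 := by omega
  exact ⟨hcard, isCyclic_of_prime_card (p := 2) hcard⟩
end

section
/- Let G be a rational Frobenius group with Frobenius complement of order 2 and abelian kernel K. Then K is an elementary abelian 3-group and the complement acts on K by inverting every non-identity element. -/
open CategoryTheory

theorem rational_frobenius_complement_two {G : Type} [Group G] [Fintype G]
    (hrat : ∀ (x : G) (k : ℕ), Nat.Coprime k (orderOf x) → IsConj x (x ^ k))
    (K H : Subgroup G) (hfrob : IsFrobeniusWithKernel G K)
    (hcompl : Subgroup.IsComplement' K H) (hH : Nat.card H = 2)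
    (hKab : ∀ a ∈ K, ∀ b ∈ K, a * b = b * a) :
    (∀ x ∈ K, x ^ 3 = 1) ∧ (∀ h ∈ H, h ≠ 1 → ∀ x ∈ K, h * x * h⁻¹ = x⁻¹) := by
  obtain ⟨hKnorm, hKbot, hKtop, hKcent⟩ := hfrob
  -- fixed point freeness of nontrivial elements of H on K
  have fpf : ∀ h ∈ H, h ≠ 1 → ∀ x ∈ K, h * x * h⁻¹ = x → x = 1 := by
    intro h hh hne x hx heq
    by_contra hx1
    have hcent : h ∈ Subgroup.centralizer {x} := by
      rw [Subgroup.mem_centralizer_singleton_iff]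
      have : h * x = x * h := mul_inv_eq_iff_eq_mul.mp heq
      exact this
    have hK : h ∈ K := hKcent x hx hx1 hcent
    have := hcompl.disjoint
    rw [Subgroup.disjoint_def] at this
    exact hne (this hK hh)
  -- involutions
  have hsq : ∀ h ∈ H, h * h = 1 := by
    intro h hh
    have h2 : (⟨h, hh⟩ : H) ^ 2 = 1 := by
      rw [← hH]; exact pow_card_eq_one'
    have := congrArg (Subtype.val) h2
    rw [SubmonoidClass.coe_pow] at this
    simpa [pow_two] using this
  -- inversion
  have inv : ∀ h ∈ H, h ≠ 1 → ∀ x ∈ K, h * x * h⁻¹ = x⁻¹ := by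
    intro h hh hne
    have hsq' : h * h = 1 := hsq h hh
    set φ : K → K := fun a =>
      ⟨(a : G)⁻¹ * (h * a * h⁻¹), mul_mem (inv_mem a.2) (hKnorm.conj_mem a a.2 h)⟩ with hφ
    have hinj : Function.Injective φ := by
      intro a b hab
      have hab' : (a : G)⁻¹ * (h * a * h⁻¹) = (b : G)⁻¹ * (h * b * h⁻¹) :=
        congrArg Subtype.val hab
      have key : h * ((b : G) * (a : G)⁻¹) * h⁻¹ = (b : G) * (a : G)⁻¹ := by
        have : (h * b * h⁻¹) * (h * a * h⁻¹)⁻¹ = (b : G) * (a : G)⁻¹ := by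
          have := hab'.symm
          calc (h * b * h⁻¹) * (h * a * h⁻¹)⁻¹
              = (b : G) * ((b : G)⁻¹ * (h * b * h⁻¹)) * (h * a * h⁻¹)⁻¹ := by group
            _ = (b : G) * ((a : G)⁻¹ * (h * a * h⁻¹)) * (h * a * h⁻¹)⁻¹ := by rw [hab']
            _ = (b : G) * (a : G)⁻¹ := by group
        calc h * ((b : G) * (a : G)⁻¹) * h⁻¹
            = (h * b * h⁻¹) * (h * a * h⁻¹)⁻¹ := by group
          _ = (b : G) * (a : G)⁻¹ := this
      have hba : (b : G) * (a : G)⁻¹ = 1 :=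
        fpf h hh hne _ (mul_mem b.2 (inv_mem a.2)) key
      exact Subtype.ext (mul_inv_eq_one.mp hba).symm
    have hsurj : Function.Surjective φ := Finite.surjective_of_injective hinj
    intro x hx
    obtain ⟨a, ha⟩ := hsurj ⟨x, hx⟩
    have hxa : x = (a : G)⁻¹ * (h * a * h⁻¹) := (congrArg Subtype.val ha).symm
    have hσσ : h * (h * (a : G) * h⁻¹) * h⁻¹ = (a : G) := by
      have hinv' : h⁻¹ = h := by
        rw [inv_eq_iff_mul_eq_one]; exact hsq'
      calc h * (h * (a : G) * h⁻¹) * h⁻¹ = (h * h) * a * (h * h)⁻¹ := by group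
        _ = (a : G) := by rw [hsq']; group
    calc h * x * h⁻¹ = h * ((a : G)⁻¹ * (h * a * h⁻¹)) * h⁻¹ := by rw [hxa]
      _ = (h * (a : G) * h⁻¹)⁻¹ * (h * (h * (a : G) * h⁻¹) * h⁻¹) := by group
      _ = (h * (a : G) * h⁻¹)⁻¹ * (a : G) := by rw [hσσ]
      _ = ((a : G)⁻¹ * (h * a * h⁻¹))⁻¹ := by group
      _ = x⁻¹ := by rw [← hxa]
  refine ⟨?_, inv⟩
  -- get a nontrivial element of H
  have hnontriv : Nontrivial H := Finite.one_lt_card_iff_nontrivial.mp (by omega)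
  obtain ⟨h₀, hh₀ne⟩ := exists_ne (1 : H)
  have hh₀ : (h₀ : G) ∈ H := h₀.2
  have hh₀ne' : (h₀ : G) ≠ 1 := fun h1 => hh₀ne (Subtype.ext h1)
  intro x hx
  by_cases hx1 : x = 1
  · simp [hx1]
  -- order of x is odd
  have hodd : ¬ (2 ∣ orderOf x) := by
    intro ⟨m, hm⟩
    have hm0 : 0 < m := by
      have := orderOf_pos x
      omega
    set y : G := x ^ m with hy
    have hyK : y ∈ K := pow_mem hx m
    have hy2 : y * y = 1 := by
      rw [hy, ← pow_add]
      have : m + m = orderOf x := by omega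
      rw [this, pow_orderOf_eq_one]
    have hyne : y ≠ 1 := by
      intro h1
      have : orderOf x ∣ m := orderOf_dvd_of_pow_eq_one h1
      have := Nat.le_of_dvd hm0 this
      omega
    have hyinv : y⁻¹ = y := by rw [inv_eq_iff_mul_eq_one]; exact hy2
    have := inv h₀ hh₀ hh₀ne' y hyK
    rw [hyinv] at this
    exact hyne (fpf h₀ hh₀ hh₀ne' y hyK this)
  have hcop : Nat.Coprime 2 (orderOf x) := Nat.prime_two.coprime_iff_not_dvd.mpr hodd
  obtain ⟨c, hc⟩ := isConj_iff.mp (hrat x 2 hcop)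
  -- hc : c * x * c⁻¹ = x ^ 2
  obtain ⟨⟨k, t⟩, hkt⟩ := (hcompl.existsUnique c).exists
  simp only at hkt
  subst hkt
  by_cases ht : (t : G) = 1
  · have hk' : (k : G) * x = x * (k : G) := hKab k k.2 x hx
    have hfix : ((k : G) * t) * x * ((k : G) * t)⁻¹ = x := by
      rw [ht, mul_one]
      calc (k : G) * x * (k : G)⁻¹ = x * (k : G) * (k : G)⁻¹ := by rw [hk']
        _ = x := by group
    have hxx : x * x = x := by
      have : x ^ 2 = x := by rw [← hc, hfix]
      rw [← pow_two]; exact this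
    have : x = 1 := mul_eq_right.mp hxx
    simp [this]
  · have htx : (t : G) * x * (t : G)⁻¹ = x⁻¹ := inv t t.2 ht x hx
    have hk' : (k : G) * x⁻¹ = x⁻¹ * (k : G) := hKab k k.2 x⁻¹ (inv_mem hx)
    have hfix : ((k : G) * t) * x * ((k : G) * t)⁻¹ = x⁻¹ := by
      calc ((k : G) * t) * x * ((k : G) * t)⁻¹
          = (k : G) * ((t : G) * x * (t : G)⁻¹) * (k : G)⁻¹ := by group
        _ = (k : G) * x⁻¹ * (k : G)⁻¹ := by rw [htx]
        _ = x⁻¹ * (k : G) * (k : G)⁻¹ := by rw [hk']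
        _ = x⁻¹ := by group
    have hx2 : x ^ 2 = x⁻¹ := by rw [← hc, hfix]
    calc x ^ 3 = x ^ 2 * x := by group
      _ = x⁻¹ * x := by rw [hx2]
      _ = 1 := by group
end

section
/- Let G = E ⋊ ⟨x⟩ where E is an elementary abelian 3-group of order 3ⁿ with n ≥ 2 and x inverts every element of E. Then there exist two distinct non-linear irreducible characters of G with equal co-degrees; hence the map χ ↦ cod(χ) on Irr(G) is not injective. -/
open CategoryTheory

noncomputable section NCIaux

def NCIω : ℂ := Complex.exp (2 * Real.pi * Complex.I / 3)

lemma NCIω_prim : IsPrimitiveRoot NCIω 3 := Complex.isPrimitiveRoot_exp 3 (by norm_num)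

lemma NCIω_pow3 : NCIω ^ 3 = 1 := NCIω_prim.pow_eq_one

lemma NCIω_ne_one : NCIω ≠ 1 := NCIω_prim.ne_one (by norm_num)

def NCIωu : ℂˣ := (NCIω_prim.isUnit (by norm_num)).unit

lemma NCIωu_val : (NCIωu : ℂ) = NCIω := rfl

lemma NCIωu_pow3 : NCIωu ^ 3 = 1 := by
  ext; push_cast [NCIωu_val]; exact NCIω_pow3

lemma NCIωu_ne_one : NCIωu ≠ 1 := by
  intro h
  exact NCIω_ne_one (by rw [← NCIωu_val, h]; rfl)

lemma NCIωu_order : orderOf NCIωu = 3 :=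
  haveI : Fact (Nat.Prime 3) := ⟨by norm_num⟩
  orderOf_eq_prime NCIωu_pow3 NCIωu_ne_one

def NCID (u : ℂˣ) : Matrix (Fin 2) (Fin 2) ℂ := !![(u : ℂ), 0; 0, ((u⁻¹ : ℂˣ) : ℂ)]
def NCIA (u : ℂˣ) : Matrix (Fin 2) (Fin 2) ℂ := !![0, (u : ℂ); ((u⁻¹ : ℂˣ) : ℂ), 0]

lemma NCID_one : NCID 1 = 1 := by
  ext i j; fin_cases i <;> fin_cases j <;> simp [NCID, Matrix.one_apply]

lemma NCID_mul_D (u v : ℂˣ) : NCID u * NCID v = NCID (u * v) := by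
  ext i j; fin_cases i <;> fin_cases j <;>
    simp [NCID, Matrix.mul_apply, Fin.sum_univ_two, mul_comm]

lemma NCID_mul_A (u v : ℂˣ) : NCID u * NCIA v = NCIA (u * v) := by
  ext i j; fin_cases i <;> fin_cases j <;>
    simp [NCID, NCIA, Matrix.mul_apply, Fin.sum_univ_two, mul_comm]

lemma NCIA_mul_D (u v : ℂˣ) : NCIA u * NCID v = NCIA (u * v⁻¹) := by
  ext i j; fin_cases i <;> fin_cases j <;>
    simp [NCID, NCIA, Matrix.mul_apply, Fin.sum_univ_two, mul_comm]

lemma NCIA_mul_A (u v : ℂˣ) : NCIA u * NCIA v = NCID (u * v⁻¹) := by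
  ext i j; fin_cases i <;> fin_cases j <;>
    simp [NCID, NCIA, Matrix.mul_apply, Fin.sum_univ_two, mul_comm]

variable {G : Type} [Group G]

open Classical in
/-- the matrix-valued function underlying the induced representation -/
def NCIM (E : Subgroup G) (x : G) (lam : ↥E →* ℂˣ) (g : G) : Matrix (Fin 2) (Fin 2) ℂ :=
  if h : g ∈ E then NCID (lam ⟨g, h⟩)
  else if h2 : g * x ∈ E then NCIA (lam ⟨g * x, h2⟩) else 0

lemma NCIM_of_mem (E : Subgroup G) (x : G) (lam : ↥E →* ℂˣ) {g : G} (h : g ∈ E) :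
    NCIM E x lam g = NCID (lam ⟨g, h⟩) := by
  simp only [NCIM]; rw [dif_pos h]

lemma NCIM_of_not_mem (E : Subgroup G) (x : G) (lam : ↥E →* ℂˣ) {g : G} (h : ¬ g ∈ E)
    (h2 : g * x ∈ E) : NCIM E x lam g = NCIA (lam ⟨g * x, h2⟩) := by
  simp only [NCIM]; rw [dif_neg h, dif_pos h2]

section hom

variable (E : Subgroup G) (x : G) (lam : ↥E →* ℂˣ)
variable (hxx : x * x = 1) (hmem : ∀ g : G, g ∉ E → g * x ∈ E)
variable (hswap : ∀ a ∈ E, x * a = a⁻¹ * x)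

include hxx hmem hswap in
lemma NCIM_mul (g h : G) :
    NCIM E x lam (g * h) = NCIM E x lam g * NCIM E x lam h := by
  by_cases hg : g ∈ E <;> by_cases hh : h ∈ E
  · rw [NCIM_of_mem E x lam (mul_mem hg hh), NCIM_of_mem E x lam hg, NCIM_of_mem E x lam hh,
      NCID_mul_D, ← map_mul]
    rfl
  · have hgh : g * h ∉ E := fun p => hh (by
      have : h = g⁻¹ * (g * h) := by group
      rw [this]; exact mul_mem (inv_mem hg) p)
    rw [NCIM_of_not_mem E x lam hgh (hmem _ hgh), NCIM_of_mem E x lam hg,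
      NCIM_of_not_mem E x lam hh (hmem _ hh), NCID_mul_A, ← map_mul]
    exact congrArg (fun a : ↥E => NCIA (lam a)) (Subtype.ext (mul_assoc g h x))
  · have hgh : g * h ∉ E := fun p => hg (by
      have : g = (g * h) * h⁻¹ := by group
      rw [this]; exact mul_mem p (inv_mem hh))
    rw [NCIM_of_not_mem E x lam hgh (hmem _ hgh), NCIM_of_not_mem E x lam hg (hmem _ hg),
      NCIM_of_mem E x lam hh, NCIA_mul_D, ← map_inv, ← map_mul]
    refine congrArg (fun a : ↥E => NCIA (lam a)) (Subtype.ext ?_)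
    show g * h * x = g * x * h⁻¹
    have h1 : x * h⁻¹ = h * x := by
      have := hswap h⁻¹ (inv_mem hh); rwa [inv_inv] at this
    rw [mul_assoc, mul_assoc, h1, ← mul_assoc]
  · have hid : (g * x) * (h * x)⁻¹ = g * h := by
      have h1 : x * (h * x)⁻¹ = (h * x) * x := by
        have := hswap (h * x)⁻¹ (inv_mem (hmem _ hh)); rwa [inv_inv] at this
      rw [mul_assoc, h1, mul_assoc, hxx, mul_one]
    have hgh : g * h ∈ E := by
      rw [← hid]; exact mul_mem (hmem _ hg) (inv_mem (hmem _ hh))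
    rw [NCIM_of_mem E x lam hgh, NCIM_of_not_mem E x lam hg (hmem _ hg),
      NCIM_of_not_mem E x lam hh (hmem _ hh), NCIA_mul_A, ← map_inv, ← map_mul]
    exact congrArg (fun a : ↥E => NCID (lam a)) (Subtype.ext hid.symm)

/-- the matrix representation as a monoid hom -/
def NCIhom : G →* Matrix (Fin 2) (Fin 2) ℂ where
  toFun := NCIM E x lam
  map_one' := by
    rw [NCIM_of_mem E x lam (one_mem E)]
    have : (⟨(1 : G), one_mem E⟩ : ↥E) = 1 := rfl
    rw [this, map_one, NCID_one]
  map_mul' := NCIM_mul E x lam hxx hmem hswap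

/-- the representation on `Fin 2 → ℂ` -/
def NCIrep : Representation ℂ G (Fin 2 → ℂ) :=
  ((Matrix.toLinAlgEquiv' : Matrix (Fin 2) (Fin 2) ℂ ≃ₐ[ℂ] _).toAlgHom.toRingHom.toMonoidHom).comp
    (NCIhom E x lam hxx hmem hswap)

/-- the FDRep -/
def NCIV : FDRep ℂ G := FDRep.of (NCIrep E x lam hxx hmem hswap)

lemma NCIV_ρ (g : G) :
    (NCIV E x lam hxx hmem hswap).ρ g = Matrix.toLinAlgEquiv' (NCIM E x lam g) := rfl

lemma NCIV_finrank : Module.finrank ℂ (NCIV E x lam hxx hmem hswap) = 2 := by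
  show Module.finrank ℂ (Fin 2 → ℂ) = 2
  simp

end hom

lemma NCItrace (M : Matrix (Fin 2) (Fin 2) ℂ) :
    LinearMap.trace ℂ (Fin 2 → ℂ) (Matrix.toLinAlgEquiv' M) = M.trace := by
  rw [LinearMap.trace_eq_matrix_trace ℂ (Pi.basisFun ℂ (Fin 2)), LinearMap.toMatrix_eq_toMatrix']
  congr 1
  exact LinearMap.toMatrix'_toLin' M

section char

variable (E : Subgroup G) (x : G) (lam : ↥E →* ℂˣ)
variable (hxx : x * x = 1) (hmem : ∀ g : G, g ∉ E → g * x ∈ E)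
variable (hswap : ∀ a ∈ E, x * a = a⁻¹ * x)

lemma NCIchar_mem {g : G} (h : g ∈ E) :
    (NCIV E x lam hxx hmem hswap).character g
      = ((lam ⟨g, h⟩ : ℂˣ) : ℂ) + (((lam ⟨g, h⟩)⁻¹ : ℂˣ) : ℂ) := by
  have h1 : (NCIV E x lam hxx hmem hswap).character g
      = LinearMap.trace ℂ (Fin 2 → ℂ) (Matrix.toLinAlgEquiv' (NCIM E x lam g)) := rfl
  rw [h1, NCItrace, NCIM_of_mem E x lam h, NCID, Matrix.trace_fin_two_of]

lemma NCIV_mem_ker_iff (g : G) :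
    g ∈ (NCIV E x lam hxx hmem hswap).charKer ↔ ∃ h : g ∈ E, lam ⟨g, h⟩ = 1 := by
  rw [FDRep.charKer, MonoidHom.mem_ker, Units.ext_iff, Units.val_one,
    Representation.asGroupHom_apply]
  have hM : (NCIV E x lam hxx hmem hswap).ρ g = 1 ↔ NCIM E x lam g = 1 := by
    rw [NCIV_ρ]
    exact ⟨fun h => by simpa using Matrix.toLinAlgEquiv'.injective (h.trans (map_one _).symm),
      fun h => by rw [h, map_one]; rfl⟩
  rw [hM]
  constructor
  · intro h
    by_cases hg : g ∈ E
    · refine ⟨hg, ?_⟩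
      rw [NCIM_of_mem E x lam hg] at h
      have h00 := congrFun (congrFun h 0) 0
      have : ((lam ⟨g, hg⟩ : ℂˣ) : ℂ) = 1 := by
        simpa [NCID, Matrix.one_apply] using h00
      exact Units.ext this
    · rw [NCIM_of_not_mem E x lam hg (hmem _ hg)] at h
      have h00 := congrFun (congrFun h 0) 0
      simp [NCIA, Matrix.one_apply] at h00
  · rintro ⟨hg, hl⟩
    rw [NCIM_of_mem E x lam hg, hl, NCID_one]

lemma NCIspan (S : Submodule ℂ (Fin 2 → ℂ)) (h0 : (![1, 0] : Fin 2 → ℂ) ∈ S)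
    (h1 : (![0, 1] : Fin 2 → ℂ) ∈ S) : S = ⊤ := by
  rw [eq_top_iff]
  rintro z -
  have hz : z = z 0 • (![1, 0] : Fin 2 → ℂ) + z 1 • (![0, 1] : Fin 2 → ℂ) := by
    funext i; fin_cases i <;> simp
  rw [hz]
  exact S.add_mem (S.smul_mem _ h0) (S.smul_mem _ h1)

lemma NCIclassify (c : ℂ) (hc3 : c ^ 3 = 1) (hc1 : c ≠ 1) (S : Submodule ℂ (Fin 2 → ℂ))
    (hD : ∀ v ∈ S, Matrix.mulVec !![c, 0; 0, c⁻¹] v ∈ S)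
    (hA : ∀ v ∈ S, Matrix.mulVec !![0, 1; 1, 0] v ∈ S)
    (v : Fin 2 → ℂ) (hv : v ∈ S) (hv0 : v ≠ 0) : S = ⊤ := by
  have hc0 : c ≠ 0 := by rintro rfl; norm_num at hc3
  have hcc : c⁻¹ ≠ c := by
    intro h
    have h2 : c * c = 1 := by nth_rewrite 1 [← h]; exact inv_mul_cancel₀ hc0
    have h3 : c ^ 3 = c := by
      rw [show (3 : ℕ) = 2 + 1 from rfl, pow_succ, pow_two, h2, one_mul]
    exact hc1 (h3 ▸ hc3)
  have hswapvec : ∀ a b : ℂ, Matrix.mulVec !![(0:ℂ), 1; 1, 0] ![a, b] = ![b, a] := by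
    intro a b
    funext i
    fin_cases i <;> simp [Matrix.mulVec, dotProduct, Fin.sum_univ_two]
  by_cases h00 : v 0 = 0
  · have h10 : v 1 ≠ 0 := by
      intro h10
      exact hv0 (by funext i; fin_cases i <;> simp [h00, h10])
    set w : Fin 2 → ℂ := c • v - Matrix.mulVec !![c, 0; 0, c⁻¹] v with hw
    have hwS : w ∈ S := S.sub_mem (S.smul_mem _ hv) (hD v hv)
    have hw0 : w 0 = 0 := by
      simp [hw, Matrix.mulVec, dotProduct, Fin.sum_univ_two, h00,
        Matrix.vecHead, Matrix.vecTail, Pi.smul_apply, smul_eq_mul]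
    have hw1 : w 1 = (c - c⁻¹) * v 1 := by
      simp [hw, Matrix.mulVec, dotProduct, Fin.sum_univ_two,
        Matrix.vecHead, Matrix.vecTail, Pi.smul_apply, smul_eq_mul]
      ring
    have hw1ne : w 1 ≠ 0 := by
      rw [hw1]
      exact mul_ne_zero (sub_ne_zero.mpr fun h => hcc h.symm) h10
    have he1 : (![0, 1] : Fin 2 → ℂ) ∈ S := by
      have heq : (![0, 1] : Fin 2 → ℂ) = (w 1)⁻¹ • w := by
        funext i
        fin_cases i <;> simp [hw0, inv_mul_cancel₀ hw1ne]
      rw [heq]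
      exact S.smul_mem _ hwS
    have he0 : (![1, 0] : Fin 2 → ℂ) ∈ S := by
      have := hA _ he1
      rwa [hswapvec] at this
    exact NCIspan S he0 he1
  · set w : Fin 2 → ℂ := c⁻¹ • v - Matrix.mulVec !![c, 0; 0, c⁻¹] v with hw
    have hwS : w ∈ S := S.sub_mem (S.smul_mem _ hv) (hD v hv)
    have hw1 : w 1 = 0 := by
      simp [hw, Matrix.mulVec, dotProduct, Fin.sum_univ_two,
        Matrix.vecHead, Matrix.vecTail, Pi.smul_apply, smul_eq_mul]
    have hw0 : w 0 = (c⁻¹ - c) * v 0 := by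
      simp [hw, Matrix.mulVec, dotProduct, Fin.sum_univ_two,
        Matrix.vecHead, Matrix.vecTail, Pi.smul_apply, smul_eq_mul]
      ring
    have hw0ne : w 0 ≠ 0 := by
      rw [hw0]
      exact mul_ne_zero (sub_ne_zero.mpr hcc) h00
    have he0 : (![1, 0] : Fin 2 → ℂ) ∈ S := by
      have heq : (![1, 0] : Fin 2 → ℂ) = (w 0)⁻¹ • w := by
        funext i
        fin_cases i <;> simp [hw1, inv_mul_cancel₀ hw0ne]
      rw [heq]
      exact S.smul_mem _ hwS
    have he1 : (![0, 1] : Fin 2 → ℂ) ∈ S := by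
      have := hA _ he0
      rwa [hswapvec] at this
    exact NCIspan S he0 he1

section simplelemma

lemma NCIcomm {Y Z : FDRep ℂ G} (f : Y ⟶ Z) (g : G) (v : Y) :
    f.hom (Y.ρ g v) = Z.ρ g (f.hom v) := by
  have := congrFun (congrArg (fun (h : Y.V ⟶ Z.V) => (h : Y → Z)) (f.comm g)) v
  exact this

include hxx hmem in
lemma NCIM_x (hxE : x ∉ E) : NCIM E x lam x = !![(0 : ℂ), 1; 1, 0] := by
  rw [NCIM_of_not_mem E x lam hxE (hmem x hxE)]
  have h1 : (⟨x * x, hmem x hxE⟩ : ↥E) = 1 := Subtype.ext hxx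
  rw [h1, map_one]
  have : ((1 : ℂˣ)⁻¹ : ℂˣ) = 1 := inv_one
  rw [NCIA, this]
  norm_num

lemma NCIM_a (a : ↥E) : NCIM E x lam (↑a : G) = NCID (lam a) := by
  rw [NCIM_of_mem E x lam a.2]

include hswap in
lemma NCIsimple (hxE : x ∉ E) (a₀ : ↥E) (ha₀ : lam a₀ = NCIωu) :
    Simple (NCIV E x lam hxx hmem hswap) := by
  have hρa : (NCIV E x lam hxx hmem hswap).ρ (↑a₀ : G)
      = Matrix.toLinAlgEquiv' !![NCIω, 0; 0, NCIω⁻¹] := by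
    rw [NCIV_ρ, NCIM_a]
    congr 1
    rw [ha₀, NCID, Units.val_inv_eq_inv_val, NCIωu_val]
  have hρx : (NCIV E x lam hxx hmem hswap).ρ x
      = Matrix.toLinAlgEquiv' !![(0 : ℂ), 1; 1, 0] := by
    rw [NCIV_ρ, NCIM_x E x lam hxx hmem hxE]
  set X := NCIV E x lam hxx hmem hswap with hXdef
  constructor
  intro Y f hfmono
  constructor
  · -- IsIso f → f ≠ 0
    intro hiso h0
    have h1 : 𝟙 X = 0 := by
      calc 𝟙 X = inv f ≫ f := (IsIso.inv_hom_id f).symm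
        _ = inv f ≫ 0 := congrArg (fun q : Y ⟶ X => inv f ≫ q) h0
        _ = 0 := Limits.comp_zero
    have h2 := congrFun (congrArg (fun (φ : X ⟶ X) => (φ.hom : X → X)) h1)
      (show X from (![1, 0] : Fin 2 → ℂ))
    have h3 : (![(1 : ℂ), 0] : Fin 2 → ℂ) = 0 := h2
    have h4 := congrFun h3 0
    norm_num at h4
  · -- f ≠ 0 → IsIso f
    intro hne
    -- injectivity
    have hinj : Function.Injective (f.hom.hom.hom : Y →ₗ[ℂ] X) := by
      rw [← LinearMap.ker_eq_bot]
      set K := LinearMap.ker (f.hom.hom.hom : Y →ₗ[ℂ] X) with hK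
      have hKinv : ∀ (g : G), ∀ v ∈ K, Y.ρ g v ∈ K := by
        intro g v hv
        rw [LinearMap.mem_ker] at hv ⊢
        exact (NCIcomm f g v).trans (by change (X.ρ g) (f.hom.hom.hom v) = 0; rw [hv, map_zero])
      let KV : FDRep ℂ G := FDRep.of {
        toFun := fun g => (Y.ρ g).restrict (fun v hv => hKinv g v hv)
        map_one' := by ext v; simp
        map_mul' := by intro g h; ext v; simp }
      let ι : KV ⟶ Y := ⟨FGModuleCat.ofHom K.subtype, by intro g; apply FGModuleCat.hom_ext; apply LinearMap.ext; intro v; rfl⟩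
      have hι : ι ≫ f = 0 ≫ f := by
        rw [Limits.zero_comp]
        ext1
        apply FGModuleCat.hom_ext
        apply LinearMap.ext
        intro v
        exact v.2
      have hι0 : ι = 0 := (cancel_mono f).mp hι
      rw [eq_bot_iff]
      intro v hv
      have := congrFun (congrArg (fun (φ : KV ⟶ Y) => (φ.hom : KV → Y)) hι0)
        (show KV from (⟨v, hv⟩ : K))
      exact this
    -- surjectivity
    have hsurj : Function.Surjective (f.hom.hom.hom : Y →ₗ[ℂ] X) := by
      rw [← LinearMap.range_eq_top]
      set R := LinearMap.range (f.hom.hom.hom : Y →ₗ[ℂ] X) with hR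
      have hRinv : ∀ (g : G), ∀ v ∈ R, X.ρ g v ∈ R := by
        rintro g v ⟨y, rfl⟩
        exact ⟨Y.ρ g y, NCIcomm f g y⟩
      have hfne : (f.hom.hom.hom : Y →ₗ[ℂ] X) ≠ 0 := by
        intro h
        exact hne (by ext1; apply FGModuleCat.hom_ext; exact h)
      obtain ⟨y, hy⟩ : ∃ y : Y, (f.hom.hom.hom : Y →ₗ[ℂ] X) y ≠ 0 := by
        by_contra hc
        push_neg at hc
        exact hfne (LinearMap.ext hc)
      exact NCIclassify NCIω NCIω_pow3 NCIω_ne_one R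
        (fun v hv => by
          have := hRinv (↑a₀ : G) v hv
          rw [hρa] at this
          exact this)
        (fun v hv => by
          have := hRinv x v hv
          rw [hρx] at this
          exact this)
        ((f.hom.hom.hom : Y →ₗ[ℂ] X) y) ⟨y, rfl⟩ hy
    set e := LinearEquiv.ofBijective (f.hom.hom.hom : Y →ₗ[ℂ] X) ⟨hinj, hsurj⟩ with he
    have key : ∀ z : X, (f.hom.hom.hom : Y →ₗ[ℂ] X) (e.symm z) = z := fun z => by
      have := e.apply_symm_apply z
      exact this
    have key2 : ∀ y : Y, e.symm ((f.hom.hom.hom : Y →ₗ[ℂ] X) y) = y := fun y => by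
      have := e.symm_apply_apply y
      exact this
    let ginv : X ⟶ Y := ⟨FGModuleCat.ofHom (e.symm : X ≃ₗ[ℂ] Y).toLinearMap, by
      intro g
      apply FGModuleCat.hom_ext
      apply LinearMap.ext
      intro v
      show e.symm (X.ρ g v) = Y.ρ g (e.symm v)
      apply hinj
      have hc : f.hom.hom.hom (Y.ρ g (e.symm v)) = X.ρ g (f.hom.hom.hom (e.symm v)) :=
        NCIcomm f g (e.symm v)
      rw [key, hc, key]⟩
    refine ⟨⟨ginv, ?_, ?_⟩⟩
    · ext1
      apply FGModuleCat.hom_ext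
      apply LinearMap.ext
      intro v
      show e.symm ((f.hom.hom.hom : Y →ₗ[ℂ] X) v) = v
      exact key2 v
    · ext1
      apply FGModuleCat.hom_ext
      apply LinearMap.ext
      intro v
      show (f.hom.hom.hom : Y →ₗ[ℂ] X) (e.symm v) = v
      exact key v

end simplelemma

section kernel

variable (E : Subgroup G) (x : G) (lam : ↥E →* ℂˣ)
variable (hxx : x * x = 1) (hmem : ∀ g : G, g ∉ E → g * x ∈ E)
variable (hswap : ∀ a ∈ E, x * a = a⁻¹ * x)

lemma NCIker_le : (NCIV E x lam hxx hmem hswap).charKer ≤ E := by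
  intro g hg
  obtain ⟨h, -⟩ := (NCIV_mem_ker_iff E x lam hxx hmem hswap g).mp hg
  exact h

lemma NCIker_subgroupOf :
    (NCIV E x lam hxx hmem hswap).charKer.subgroupOf E = MonoidHom.ker lam := by
  ext a
  rw [Subgroup.mem_subgroupOf, NCIV_mem_ker_iff, MonoidHom.mem_ker]
  constructor
  · rintro ⟨h, hl⟩
    rwa [Subtype.coe_eta] at hl
  · intro hl
    exact ⟨a.2, by rwa [Subtype.coe_eta]⟩

lemma NCIrange (hE3' : ∀ a : ↥E, a ^ 3 = 1) (a₀ : ↥E) (ha₀ : lam a₀ = NCIωu) :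
    MonoidHom.range lam = Subgroup.zpowers NCIωu := by
  apply le_antisymm
  · rintro u ⟨a, rfl⟩
    have h3 : lam a ^ 3 = 1 := by rw [← map_pow, hE3' a, map_one]
    have h3' : ((lam a : ℂˣ) : ℂ) ^ 3 = 1 := by
      rw [← Units.val_pow_eq_pow_val, h3, Units.val_one]
    obtain ⟨i, -, hi⟩ := NCIω_prim.eq_pow_of_pow_eq_one h3'
    rw [Subgroup.mem_zpowers_iff]
    refine ⟨(i : ℤ), Units.ext ?_⟩
    rw [zpow_natCast, ← hi, Units.val_pow_eq_pow_val, NCIωu_val]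
  · rw [Subgroup.zpowers_le]
    exact ⟨a₀, ha₀⟩

lemma NCIker_index (hE3' : ∀ a : ↥E, a ^ 3 = 1) (a₀ : ↥E) (ha₀ : lam a₀ = NCIωu) :
    (NCIV E x lam hxx hmem hswap).charKer.index = 3 * E.index := by
  rw [← Subgroup.relIndex_mul_index (NCIker_le E x lam hxx hmem hswap)]
  congr 1
  rw [Subgroup.relIndex, NCIker_subgroupOf, Subgroup.index_ker,
    NCIrange E lam hE3' a₀ ha₀, Nat.card_zpowers, NCIωu_order]

end kernel

lemma NCIω_sum : NCIω + NCIω⁻¹ = -1 := by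
  have key : NCIω ^ 2 + NCIω + 1 = 0 := by
    have h0 : (NCIω - 1) * (NCIω ^ 2 + NCIω + 1) = NCIω ^ 3 - 1 := by ring
    rw [NCIω_pow3, sub_self] at h0
    rcases mul_eq_zero.mp h0 with h | h
    · exact absurd (sub_eq_zero.mp h) NCIω_ne_one
    · exact h
  have hinv : NCIω⁻¹ = NCIω ^ 2 := by
    apply inv_eq_of_mul_eq_one_right
    rw [← pow_succ', NCIω_pow3]
  rw [hinv]
  linear_combination key

lemma NCIpow_val_add (u : ℂˣ) (hu : u ^ 3 = 1) (j k : ZMod 3) :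
    u ^ (j + k).val = u ^ j.val * u ^ k.val := by
  calc u ^ (j + k).val = u ^ ((j.val + k.val) % 3) := by rw [ZMod.val_add]
    _ = u ^ ((j.val + k.val) % 3) * (u ^ 3) ^ ((j.val + k.val) / 3) := by
        rw [hu, one_pow, mul_one]
    _ = u ^ ((j.val + k.val) % 3 + 3 * ((j.val + k.val) / 3)) := by rw [pow_add, pow_mul]
    _ = u ^ (j.val + k.val) := by rw [Nat.mod_add_div]
    _ = u ^ j.val * u ^ k.val := pow_add u _ _

end char

/-- character of `E` from an additive character mod 3 -/
def NCIlamOf (E : Subgroup G) (φ : Additive ↥E →+ ZMod 3) : ↥E →* ℂˣ where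
  toFun a := NCIωu ^ (φ (Additive.ofMul a)).val
  map_one' := by
    show NCIωu ^ (φ (Additive.ofMul (1 : ↥E))).val = 1
    rw [ofMul_one, map_zero, ZMod.val_zero, pow_zero]
  map_mul' a b := by
    show NCIωu ^ (φ (Additive.ofMul (a * b))).val
      = NCIωu ^ (φ (Additive.ofMul a)).val * NCIωu ^ (φ (Additive.ofMul b)).val
    rw [ofMul_mul, map_add, NCIpow_val_add _ NCIωu_pow3]

end NCIaux

theorem not_codInjective_of_large_elementary_abelian_kernel {G : Type} [Group G] [Fintype G]
    (n : ℕ) (hn : 2 ≤ n) (E : Subgroup G) [E.Normal] (x : G)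
    (hE3 : ∀ a ∈ E, a ^ 3 = 1) (hEab : ∀ a ∈ E, ∀ b ∈ E, a * b = b * a)
    (hcard : Nat.card E = 3 ^ n) (hx : orderOf x = 2)
    (hinv : ∀ a ∈ E, x * a * x⁻¹ = a⁻¹)
    (hcompl : Subgroup.IsComplement' E (Subgroup.zpowers x)) :
    (∃ V W : FDRep ℂ G, Simple V ∧ Simple W ∧ 1 < Module.finrank ℂ V ∧
      1 < Module.finrank ℂ W ∧ V.character ≠ W.character ∧ V.cod = W.cod) ∧
    ¬ codInjective G := by
  classical
  have hxx : x * x = 1 := by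
    have h := pow_orderOf_eq_one x
    rwa [hx, pow_two] at h
  have hxE : x ∉ E := by
    intro hmemE
    have hdvd : orderOf x ∣ 3 := orderOf_dvd_of_pow_eq_one (hE3 x hmemE)
    rw [hx] at hdvd
    norm_num at hdvd
  have hcardE_pos : Nat.card ↥E ≠ 0 := by rw [hcard]; positivity
  have hidx : E.index = 2 := by
    have h1 : Nat.card ↥E * E.index = Nat.card G := Subgroup.card_mul_index E
    have h2 : Nat.card ↥E * Nat.card ↥(Subgroup.zpowers x) = Nat.card G :=
      hcompl.card_mul
    rw [Nat.card_zpowers, hx] at h2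
    exact Nat.eq_of_mul_eq_mul_left (Nat.pos_of_ne_zero hcardE_pos) (h1.trans h2.symm)
  have hmem : ∀ g : G, g ∉ E → g * x ∈ E := fun g hg =>
    (Subgroup.mul_mem_iff_of_index_two hidx).mpr (iff_of_false hg hxE)
  have hswap : ∀ a ∈ E, x * a = a⁻¹ * x := by
    intro a ha
    have h := hinv a ha
    rw [← h]
    group
  have hE3' : ∀ a : ↥E, a ^ 3 = 1 := fun a => Subtype.ext (by
    have h := hE3 ↑a a.2
    simpa using h)
  letI : CommGroup ↥E :=
    { (inferInstance : Group ↥E) with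
      mul_comm := fun a b => Subtype.ext (hEab ↑a a.2 ↑b b.2) }
  letI : Module (ZMod 3) (Additive ↥E) := AddCommGroup.zmodModule (by
    intro a
    have h1 : (3 : ℕ) • a = Additive.ofMul (a.toMul ^ 3) := (ofMul_pow 3 a.toMul).symm
    rw [h1, hE3' a.toMul]
    rfl)
  haveI : Finite (Additive ↥E) := Finite.of_equiv ↥E Additive.ofMul
  have hrank : 2 ≤ Module.finrank (ZMod 3) (Additive ↥E) := by
    haveI : Fintype (Additive ↥E) := Fintype.ofFinite _
    have hc := Module.card_eq_pow_finrank (K := ZMod 3) (V := Additive ↥E)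
    rw [ZMod.card] at hc
    have hcn : Fintype.card (Additive ↥E) = 3 ^ n := by
      rw [← Nat.card_eq_fintype_card]
      rw [Nat.card_congr (Additive.toMul (α := ↥E))]
      exact hcard
    have h3 : (3 : ℕ) ^ n = 3 ^ Module.finrank (ZMod 3) (Additive ↥E) := by
      rw [← hcn, hc]
    have heq : n = Module.finrank (ZMod 3) (Additive ↥E) :=
      Nat.pow_right_injective (by norm_num) h3
    omega
  set d := Module.finrank (ZMod 3) (Additive ↥E) with hd
  let b : Module.Basis (Fin d) (ZMod 3) (Additive ↥E) := Module.finBasis (ZMod 3) (Additive ↥E)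
  let i0 : Fin d := ⟨0, by omega⟩
  let i1 : Fin d := ⟨1, by omega⟩
  have hi01 : i0 ≠ i1 := by
    intro h
    have := congrArg Fin.val h
    simp [i0, i1] at this
  let lam1 := NCIlamOf E (b.coord i0).toAddMonoidHom
  let lam2 := NCIlamOf E (b.coord i1).toAddMonoidHom
  let e1 : ↥E := Additive.toMul (b i0)
  let e2 : ↥E := Additive.toMul (b i1)
  have hl1e1 : lam1 e1 = NCIωu := by
    show NCIωu ^ ((b.coord i0) (b i0)).val = NCIωu
    rw [Module.Basis.coord_apply, Module.Basis.repr_self, Finsupp.single_eq_same]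
    rw [ZMod.val_one, pow_one]
  have hl2e1 : lam2 e1 = 1 := by
    show NCIωu ^ ((b.coord i1) (b i0)).val = 1
    rw [Module.Basis.coord_apply, Module.Basis.repr_self, Finsupp.single_eq_of_ne' hi01]
    rw [ZMod.val_zero, pow_zero]
  have hl2e2 : lam2 e2 = NCIωu := by
    show NCIωu ^ ((b.coord i1) (b i1)).val = NCIωu
    rw [Module.Basis.coord_apply, Module.Basis.repr_self, Finsupp.single_eq_same]
    rw [ZMod.val_one, pow_one]
  let V := NCIV E x lam1 hxx hmem hswap
  let W := NCIV E x lam2 hxx hmem hswap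
  have hSV : Simple V := NCIsimple E x lam1 hxx hmem hswap hxE e1 hl1e1
  have hSW : Simple W := NCIsimple E x lam2 hxx hmem hswap hxE e2 hl2e2
  have hVchar : V.character ↑e1 = -1 := by
    rw [show V.character ↑e1
        = ((lam1 ⟨↑e1, e1.2⟩ : ℂˣ) : ℂ) + (((lam1 ⟨↑e1, e1.2⟩)⁻¹ : ℂˣ) : ℂ) from
      NCIchar_mem E x lam1 hxx hmem hswap e1.2]
    rw [Subtype.coe_eta, hl1e1, Units.val_inv_eq_inv_val, NCIωu_val]
    exact NCIω_sum
  have hWchar : W.character ↑e1 = 2 := by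
    rw [show W.character ↑e1
        = ((lam2 ⟨↑e1, e1.2⟩ : ℂˣ) : ℂ) + (((lam2 ⟨↑e1, e1.2⟩)⁻¹ : ℂˣ) : ℂ) from
      NCIchar_mem E x lam2 hxx hmem hswap e1.2]
    rw [Subtype.coe_eta, hl2e1]
    norm_num
  have hcharne : V.character ≠ W.character := by
    intro h
    have h1 := congrFun h ↑e1
    rw [hVchar, hWchar] at h1
    norm_num at h1
  have hcodV : V.cod = 3 := by
    rw [FDRep.cod, NCIker_index E x lam1 hxx hmem hswap hE3' e1 hl1e1, hidx, NCIV_finrank]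
  have hcodW : W.cod = 3 := by
    rw [FDRep.cod, NCIker_index E x lam2 hxx hmem hswap hE3' e2 hl2e2, hidx, NCIV_finrank]
  refine ⟨⟨V, W, hSV, hSW, ?_, ?_, hcharne, by rw [hcodV, hcodW]⟩, ?_⟩
  · rw [NCIV_finrank]
    norm_num
  · rw [NCIV_finrank]
    norm_num
  · intro hci
    exact hcharne (hci V W hSV hSW (by rw [hcodV, hcodW]))
end
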